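/- Let R be a commutative ring and a, u, v, b, λ ∈ R, and assume that u·v − 1 and λ are invertible in R, with inverses (uv−1)⁻¹ and λ⁻¹. Then: (1) η(a)·η(u)·η(v)·η(b) = η(a + (1−v)·(uv−1)⁻¹)·η(uv−1)·η(b + (1−u)·(uv−1)⁻¹); (2) η(a)·η(u)·η(v)·η(b) = η(a + (λ⁻¹−1)·v·(uv−1)⁻¹)·η(λ·u)·η(λ⁻¹·v)·η(b + (λ−1)·u·(uv−1)⁻¹); (3) for all u ∈ R (no invertibility needed), η(a)·η(0)·η(b) = η(a+u)·η(0)·η(b−u) = −η(a+b). -/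
import Mathlib


/-- The matrix `η(c) = !![c, -1; 1, 0]` over a commutative ring. -/
def etaR {R : Type*} [CommRing R] (c : R) : Matrix (Fin 2) (Fin 2) R := !![c, -1; 1, 0]

/-- Transformation rules for products of `η`-matrices, where `u·v − 1` and `λ` are
invertible in the commutative ring `R`. -/
theorem stmt11 {R : Type*} [CommRing R] (a u v b l : R)
    [Invertible (u * v - 1)] [Invertible l] :
    (etaR a * etaR u * etaR v * etaR b =
      etaR (a + (1 - v) * ⅟(u * v - 1)) * etaR (u * v - 1) *
        etaR (b + (1 - u) * ⅟(u * v - 1))) ∧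
    (etaR a * etaR u * etaR v * etaR b =
      etaR (a + (⅟l - 1) * v * ⅟(u * v - 1)) * etaR (l * u) * etaR (⅟l * v) *
        etaR (b + (l - 1) * u * ⅟(u * v - 1))) ∧
    (∀ w : R,
      etaR a * etaR 0 * etaR b = etaR (a + w) * etaR 0 * etaR (b - w) ∧
      etaR a * etaR 0 * etaR b = -etaR (a + b)) := by
  have ht : (u*v-1) * ⅟(u*v-1) = 1 := mul_invOf_self _
  have hm : l * ⅟l = 1 := mul_invOf_self _
  refine ⟨?_, ?_, ?_⟩
  · ext i j
    fin_cases i <;> fin_cases j <;>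
      simp [etaR, Matrix.mul_apply, Fin.sum_univ_two]
    · linear_combination (-(a*(1-u) + (1-v)*b + (1-v)*(1-u)*⅟(u*v-1) + 1)) * ht
    · linear_combination (1-v) * ht
    · linear_combination (u-1) * ht
    · ring
  · ext i j
    fin_cases i <;> fin_cases j <;>
      simp [etaR, Matrix.mul_apply, Fin.sum_univ_two]
    · linear_combination (-(a*(l-1)*u + (⅟l-1)*v*(b+(l-1)*u*⅟(u*v-1)))) * ht +
        (-((a*u*v + (⅟l-1)*u*v^2*⅟(u*v-1))*(b+(l-1)*u*⅟(u*v-1)) - u*v*⅟(u*v-1))) * hm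
    · linear_combination ((⅟l-1)*v) * ht + (a*u*v + (⅟l-1)*u*v^2*⅟(u*v-1)) * hm
    · linear_combination (-(l-1)*u) * ht + (-(u*v*(b+(l-1)*u*⅟(u*v-1)))) * hm
    · linear_combination (-(u*v)) * hm
  · intro w
    constructor <;>
      · ext i j
        fin_cases i <;> fin_cases j <;>
          simp [etaR, Matrix.mul_apply, Fin.sum_univ_two] <;> ring
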